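/- Let d ≥ 1 and let σ, γ ∈ S_d satisfy γ² = id and γ∘σ∘γ = σ⁻¹. Let c₁, c₂ be two distinct cycle factors of σ forming a conjugated pair with respect to γ (i.e. γ∘c₁∘γ = c₂⁻¹), each with support of cardinality k ≥ 1, and let c₃ be a cycle factor of σ distinct from c₁ and c₂ with γ∘c₃∘γ = c₃⁻¹, whose support has even cardinality e and contains no fixed point of γ. Then the number of 3-cycles τ ∈ S_d such that the support of τ meets the support of each of c₁, c₂, c₃ in exactly one point and γ∘(τ∘σ)∘γ = (τ∘σ)⁻¹ equals 4k. -/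

import Mathlib

open Equiv Equiv.Perm

theorem Equiv.Perm.apply_inv_self {α : Type*} (f : Perm α) (x : α) : f (f⁻¹ x) = x :=
  f.apply_symm_apply x

theorem Equiv.Perm.inv_apply_self {α : Type*} (f : Perm α) (x : α) : f⁻¹ (f x) = x :=
  f.symm_apply_apply x

namespace CountReal3

variable {α : Type*} [DecidableEq α] [Fintype α]

omit [Fintype α] in
lemma swap_rel {x y z : α} (hxy : x ≠ y) (hxz : x ≠ z) (hyz : y ≠ z) :
    Equiv.swap y z * Equiv.swap y x = Equiv.swap x y * Equiv.swap x z := by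
  ext w
  simp only [Perm.mul_apply, swap_apply_def]
  split_ifs <;> simp_all

lemma zpow_apply_eq_iff {c : Perm α} (hc : c.IsCycle) {x : α} (hx : c x ≠ x) (n : ℤ) :
    (c ^ n) x = x ↔ (c.support.card : ℤ) ∣ n := by
  rw [← hc.orderOf, orderOf_dvd_iff_zpow_eq_one]
  constructor
  · intro h
    rcases n with m | m
    · rw [Int.ofNat_eq_coe, zpow_natCast] at h ⊢
      exact (hc.pow_eq_one_iff' hx).2 h
    · rw [zpow_negSucc] at h ⊢
      have h' : (c ^ (m + 1)) x = x := by
        have := congrArg (c ^ (m + 1)) h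
        rw [Perm.apply_inv_self] at this
        exact this.symm
      rw [(hc.pow_eq_one_iff' hx).2 h', inv_one]
  · intro h; rw [h]; rfl

def t3 (a b c : α) : Perm α := Equiv.swap a c * Equiv.swap a b

omit [Fintype α] in
lemma t3_def (a b c : α) : t3 a b c = Equiv.swap a c * Equiv.swap a b := rfl

lemma t3_isThreeCycle {a b c : α} (hab : a ≠ b) (hac : a ≠ c) (hbc : b ≠ c) :
    (t3 a b c).IsThreeCycle :=
  isThreeCycle_swap_mul_swap_same hac hab (Ne.symm hbc)

omit [Fintype α] in
lemma card_triple {a b c : α} (hab : a ≠ b) (hac : a ≠ c) (hbc : b ≠ c) :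
    ({a, b, c} : Finset α).card = 3 := by
  rw [Finset.card_insert_of_notMem (by simp [hab, hac]), Finset.card_pair hbc]

lemma t3_support {a b c : α} (hab : a ≠ b) (hac : a ≠ c) (hbc : b ≠ c) :
    (t3 a b c).support = {a, b, c} := by
  apply Finset.eq_of_subset_of_card_le
  · intro x hx
    have hx' := Equiv.Perm.support_mul_le (Equiv.swap a c) (Equiv.swap a b) hx
    simp only [Finset.sup_eq_union, Finset.mem_union, support_swap hac, support_swap hab,
      Finset.mem_insert, Finset.mem_singleton] at hx'
    simp only [Finset.mem_insert, Finset.mem_singleton]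
    tauto
  · rw [card_triple hab hac hbc, (t3_isThreeCycle hab hac hbc).card_support]

omit [Fintype α] in
lemma t3_apply_a {a b c : α} (hab : a ≠ b) (hbc : b ≠ c) : t3 a b c a = b := by
  rw [t3, Perm.mul_apply, swap_apply_left a b, swap_apply_of_ne_of_ne (Ne.symm hab) hbc]

omit [Fintype α] in
lemma t3_apply_c {a b c : α} (hac : a ≠ c) (hbc : b ≠ c) : t3 a b c c = a := by
  rw [t3, Perm.mul_apply, swap_apply_of_ne_of_ne (Ne.symm hac) (Ne.symm hbc), swap_apply_right a c]

omit [Fintype α] in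
lemma t3_inv_apply_a {a b c : α} (hac : a ≠ c) (hbc : b ≠ c) : (t3 a b c)⁻¹ a = c := by
  rw [Perm.inv_eq_iff_eq]
  exact (t3_apply_c hac hbc).symm

lemma eq_t3 {τ : Perm α} {a b c : α} (hab : a ≠ b) (hac : a ≠ c) (hbc : b ≠ c)
    (hsupp : τ.support = {a, b, c}) (ha : τ a = b) (hb : τ b = c) (hc : τ c = a) :
    τ = t3 a b c := by
  rw [t3_def]
  ext w
  by_cases hw1 : w = a
  · rw [hw1, ha, Perm.mul_apply, swap_apply_left a b,
      swap_apply_of_ne_of_ne (Ne.symm hab) hbc]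
  by_cases hw2 : w = b
  · rw [hw2, hb, Perm.mul_apply, swap_apply_right a b, swap_apply_left a c]
  by_cases hw3 : w = c
  · rw [hw3, hc, Perm.mul_apply, swap_apply_of_ne_of_ne (Ne.symm hac) (Ne.symm hbc),
      swap_apply_right a c]
  · have : w ∉ τ.support := by
      rw [hsupp]; simp [hw1, hw2, hw3]
    rw [Perm.notMem_support.mp this, Perm.mul_apply,
      swap_apply_of_ne_of_ne hw1 hw2, swap_apply_of_ne_of_ne hw1 hw3]

def phiFun (σ γ : Perm α) (S F : Finset α) (p : ↥S × ↥F × Bool) : Perm α :=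
  if p.2.2 then t3 (p.1 : α) (σ (γ (p.1 : α))) (p.2.1 : α)
  else (t3 (p.1 : α) (σ (γ (p.1 : α))) (p.2.1 : α))⁻¹

lemma card_fix_eq_two {c γ : Perm α} (hc : c.IsCycle) (hγ : γ * γ = 1)
    (hreal : γ * c * γ = c⁻¹) (heven : Even c.support.card)
    (hnofix : ∀ x ∈ c.support, γ x ≠ x) :
    (c.support.filter (fun x => c (γ x) = x)).card = 2 := by
  have hγinv : γ⁻¹ = γ := inv_eq_of_mul_eq_one_left hγ
  have hγγ : ∀ x, γ (γ x) = x := fun x => by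
    have := DFunLike.congr_fun hγ x
    simpa using this
  have hγmem : ∀ x ∈ c.support, γ x ∈ c.support := by
    intro x hx
    rw [mem_support] at hx ⊢
    intro hcx
    apply hx
    have h1 := DFunLike.congr_fun hreal x
    simp only [Perm.mul_apply] at h1
    rw [hcx, hγγ] at h1
    have h2 := congrArg c h1
    rw [Perm.apply_inv_self] at h2
    exact h2
  obtain ⟨x₀, hx₀⟩ : ∃ x, x ∈ c.support := by
    have h2c := hc.two_le_card_support
    have hpos : 0 < c.support.card := by omega
    obtain ⟨x, hx⟩ := Finset.card_pos.mp hpos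
    exact ⟨x, hx⟩
  obtain ⟨m, hm⟩ := hc.sameCycle (mem_support.mp hx₀) (mem_support.mp (hγmem x₀ hx₀))
  have horb : ∀ j : ℤ, γ ((c ^ j) x₀) = (c ^ (m - j)) x₀ := by
    intro j
    have h1 : γ * c ^ j * γ = (c ^ j)⁻¹ := by
      calc γ * c ^ j * γ = γ * c ^ j * γ⁻¹ := by rw [hγinv]
        _ = (γ * c * γ⁻¹) ^ j := conj_zpow.symm
        _ = (c⁻¹) ^ j := by rw [hγinv, hreal]
        _ = (c ^ j)⁻¹ := inv_zpow c j
    have h2 := DFunLike.congr_fun h1 (γ x₀)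
    simp only [Perm.mul_apply, hγγ] at h2
    rw [h2, ← hm, ← zpow_neg, ← Perm.mul_apply, ← zpow_add]
    congr 2
    ring
  have hpoweq : ∀ A B : ℤ, (c ^ A) x₀ = (c ^ B) x₀ ↔ (c.support.card : ℤ) ∣ (A - B) := by
    intro A B
    rw [← zpow_apply_eq_iff hc (mem_support.mp hx₀) (A - B)]
    constructor
    · intro h
      have h2 : (c ^ B) ((c ^ (A - B)) x₀) = (c ^ B) x₀ := by
        rw [← Perm.mul_apply, ← zpow_add]
        rw [show B + (A - B) = A by ring, h]
      exact (c ^ B).injective h2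
    · intro h
      have h2 : (c ^ A) x₀ = (c ^ B) ((c ^ (A - B)) x₀) := by
        rw [← Perm.mul_apply, ← zpow_add]
        congr 2
        ring
      rw [h2, h]
  have hchar : ∀ j : ℤ, (c (γ ((c ^ j) x₀)) = (c ^ j) x₀) ↔
      (c.support.card : ℤ) ∣ (m + 1 - 2 * j) := by
    intro j
    rw [horb j]
    have hcc : c ((c ^ (m - j)) x₀) = (c ^ (m - j + 1)) x₀ := by
      rw [← Perm.mul_apply]
      congr 1
      rw [← zpow_one_add]
      congr 1
      ring
    rw [hcc, hpoweq]
    congr! 1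
    ring
  have hmodd : Odd m := by
    by_contra hodd
    rw [Int.not_odd_iff_even] at hodd
    obtain ⟨t, ht⟩ := hodd
    have hmem : (c ^ t) x₀ ∈ c.support := by
      rw [zpow_apply_mem_support]; exact hx₀
    apply hnofix _ hmem
    rw [horb t, show m - t = t by omega]
  obtain ⟨t, ht⟩ := hmodd
  obtain ⟨s, hs⟩ := heven
  have hS : ((c.support.card : ℤ)) = (s : ℤ) + (s : ℤ) := by exact_mod_cast hs
  have hs1 : 1 ≤ (s : ℤ) := by
    have h2c := hc.two_le_card_support
    rw [hs] at h2c
    omega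
  have hne : (c ^ (t + 1)) x₀ ≠ (c ^ (t + 1 + (s : ℤ))) x₀ := by
    rw [Ne, hpoweq]
    intro hpp
    obtain ⟨w, hw⟩ := hpp
    rw [hS] at hw
    rcases le_or_gt 0 w with h | h
    · nlinarith
    · nlinarith
  have hset : c.support.filter (fun x => c (γ x) = x) =
      {(c ^ (t + 1)) x₀, (c ^ (t + 1 + (s : ℤ))) x₀} := by
    ext x
    simp only [Finset.mem_filter, Finset.mem_insert, Finset.mem_singleton]
    constructor
    · rintro ⟨hxs, hfix⟩
      obtain ⟨j, hj⟩ := hc.sameCycle (mem_support.mp hx₀) (mem_support.mp hxs)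
      rw [← hj] at hfix ⊢
      rw [hchar j] at hfix
      obtain ⟨u, hu⟩ := hfix
      rw [hS] at hu
      rcases Int.even_or_odd u with ⟨v, hv⟩ | ⟨v, hv⟩
      · left
        rw [hpoweq]
        refine ⟨-v, ?_⟩
        have h2 : (2:ℤ) * (j - (t + 1)) = 2 * (((s:ℤ) + s) * (-v)) := by
          subst ht hv
          ring_nf
          linarith [hu]
        have h3 := mul_left_cancel₀ (two_ne_zero (α := ℤ)) h2
        rw [hS]
        linarith [h3]
      · right
        rw [hpoweq]
        refine ⟨-(v + 1), ?_⟩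
        have h2 : (2:ℤ) * (j - (t + 1 + s)) = 2 * (((s:ℤ) + s) * (-(v + 1))) := by
          subst ht hv
          ring_nf
          linarith [hu]
        have h3 := mul_left_cancel₀ (two_ne_zero (α := ℤ)) h2
        rw [hS]
        linarith [h3]
    · rintro (rfl | rfl)
      · refine ⟨zpow_apply_mem_support.mpr hx₀, ?_⟩
        rw [hchar (t + 1), show m + 1 - 2 * (t + 1) = 0 by omega]
        exact dvd_zero _
      · refine ⟨zpow_apply_mem_support.mpr hx₀, ?_⟩
        rw [hchar (t + 1 + (s : ℤ)), hS]
        exact ⟨-1, by omega⟩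
  rw [hset, Finset.card_pair hne]

end CountReal3
open CountReal3 in
/-- Lemma: local multiplicity (i): given a conjugated pair of cycle
factors `c₁, c₂` of `σ` (of size `k`) and a real even cycle factor `c₃` (of even size `e`)
without fixed points of `γ`, the number of 3-cycles `τ` meeting each of the three supports
in exactly one point with `γ(τσ)γ = (τσ)⁻¹` is `4k`. -/
theorem count_real_three_cycles_join_pair_and_even_cycle
    (d : ℕ) (hd : 1 ≤ d) (σ γ : Perm (Fin d))
    (hγ : γ * γ = 1) (hσ : γ * σ * γ = σ⁻¹)
    (c₁ c₂ c₃ : Perm (Fin d)) (k e : ℕ) (hk : 1 ≤ k)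
    (h₁ : c₁ ∈ σ.cycleFactorsFinset) (h₂ : c₂ ∈ σ.cycleFactorsFinset)
    (h₃ : c₃ ∈ σ.cycleFactorsFinset)
    (h12 : c₁ ≠ c₂) (h31 : c₃ ≠ c₁) (h32 : c₃ ≠ c₂)
    (hpair : γ * c₁ * γ = c₂⁻¹)
    (hc₁ : c₁.support.card = k) (hc₂ : c₂.support.card = k)
    (hreal3 : γ * c₃ * γ = c₃⁻¹)
    (he : Even e) (hc₃ : c₃.support.card = e)
    (hnofix : ∀ x ∈ c₃.support, γ x ≠ x) :
    Nat.card {τ : Perm (Fin d) // τ.IsThreeCycle ∧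
        (τ.support ∩ c₁.support).card = 1 ∧
        (τ.support ∩ c₂.support).card = 1 ∧
        (τ.support ∩ c₃.support).card = 1 ∧
        γ * (τ * σ) * γ = (τ * σ)⁻¹} = 4 * k := by
  classical
  have hγinv : γ⁻¹ = γ := inv_eq_of_mul_eq_one_left hγ
  have hγγ : ∀ x, γ (γ x) = x := fun x => by simpa using DFunLike.congr_fun hγ x
  have hσγ : ∀ x, γ (σ x) = σ⁻¹ (γ x) := by
    intro x
    have h1 := DFunLike.congr_fun hσ (γ x)
    simp only [Perm.mul_apply, hγγ] at h1
    exact h1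
  have hpd := σ.cycleFactorsFinset_pairwise_disjoint
  have hd12 : Disjoint c₁.support c₂.support :=
    (hpd (Finset.mem_coe.mpr h₁) (Finset.mem_coe.mpr h₂) h12).disjoint_support
  have hd13 : Disjoint c₁.support c₃.support :=
    (hpd (Finset.mem_coe.mpr h₁) (Finset.mem_coe.mpr h₃) (Ne.symm h31)).disjoint_support
  have hd23 : Disjoint c₂.support c₃.support :=
    (hpd (Finset.mem_coe.mpr h₂) (Finset.mem_coe.mpr h₃) (Ne.symm h32)).disjoint_support
  have hfac : ∀ {c : Perm (Fin d)}, c ∈ σ.cycleFactorsFinset → ∀ x ∈ c.support, σ x = c x :=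
    fun {c} hc x hx => ((mem_cycleFactorsFinset_iff.mp hc).2 x hx).symm
  have hmemσ : ∀ {c : Perm (Fin d)}, c ∈ σ.cycleFactorsFinset →
      ∀ x ∈ c.support, σ x ∈ c.support := by
    intro c hc x hx
    rw [hfac hc x hx]
    exact apply_mem_support.mpr hx
  have hpair' : ∀ x, γ (c₁ (γ x)) = c₂⁻¹ x := fun x => by
    have := DFunLike.congr_fun hpair x
    simpa [Perm.mul_apply] using this
  have hreal3' : ∀ x, γ (c₃ (γ x)) = c₃⁻¹ x := fun x => by
    have := DFunLike.congr_fun hreal3 x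
    simpa [Perm.mul_apply] using this
  have hγ12 : ∀ x ∈ c₁.support, γ x ∈ c₂.support := by
    intro x hx
    rw [mem_support] at hx ⊢
    intro hc2
    have h1 : c₂⁻¹ (γ x) = γ x := by rw [Perm.inv_eq_iff_eq]; exact hc2.symm
    have h2 := hpair' (γ x)
    rw [hγγ, h1] at h2
    exact hx (γ.injective h2)
  have hγ33 : ∀ x ∈ c₃.support, γ x ∈ c₃.support := by
    intro x hx
    rw [mem_support] at hx ⊢
    intro hc3
    have h1 : c₃⁻¹ (γ x) = γ x := by rw [Perm.inv_eq_iff_eq]; exact hc3.symm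
    have h2 := hreal3' (γ x)
    rw [hγγ, h1] at h2
    exact hx (γ.injective h2)
  have hcond : ∀ τ : Perm (Fin d),
      (γ * (τ * σ) * γ = (τ * σ)⁻¹) ↔ (γ * τ * γ = σ⁻¹ * τ⁻¹ * σ) := by
    intro τ
    have key : γ * (τ * σ) * γ = (γ * τ * γ) * σ⁻¹ := by
      rw [← hσ]
      have h2 : γ * τ * γ * (γ * σ * γ) = γ * τ * (γ * γ) * σ * γ := by group
      rw [h2, hγ, mul_one]
      group
    rw [key, mul_inv_rev, mul_inv_eq_iff_eq_mul]
  have hc3cyc : c₃.IsCycle := (mem_cycleFactorsFinset_iff.mp h₃).1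
  set Fx := c₃.support.filter (fun x => c₃ (γ x) = x) with hFxdef
  have hfixcard : Fx.card = 2 :=
    card_fix_eq_two hc3cyc hγ hreal3 (by rw [hc₃]; exact he) hnofix
  have hb_mem : ∀ a ∈ c₁.support, σ (γ a) ∈ c₂.support := fun a ha => hmemσ h₂ _ (hγ12 a ha)
  have hga : ∀ a : Fin d, γ a = σ⁻¹ (σ (γ a)) := fun a => (Perm.inv_apply_self σ (γ a)).symm
  have hgb : ∀ a : Fin d, γ (σ (γ a)) = σ⁻¹ a := fun a => by rw [hσγ (γ a), hγγ]
  have hFx_rel : ∀ x ∈ Fx, γ x = σ⁻¹ x ∧ x ∈ c₃.support := by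
    intro x hx
    rw [hFxdef, Finset.mem_filter] at hx
    obtain ⟨hx3, hfix⟩ := hx
    refine ⟨?_, hx3⟩
    rw [Perm.eq_inv_iff_eq]
    rw [hfac h₃ _ (hγ33 x hx3)]
    exact hfix
  have hdist : ∀ a ∈ c₁.support, ∀ cc ∈ Fx,
      a ≠ σ (γ a) ∧ a ≠ cc ∧ σ (γ a) ≠ cc := by
    intro a ha cc hcc
    have hcc3 := (hFx_rel cc hcc).2
    have hb2 := hb_mem a ha
    exact ⟨fun h => Finset.disjoint_left.mp hd12 ha (h ▸ hb2),
      fun h => Finset.disjoint_left.mp hd13 ha (h ▸ hcc3),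
      fun h => Finset.disjoint_left.mp hd23 hb2 (h ▸ hcc3)⟩
  have hreal_t3 : ∀ a ∈ c₁.support, ∀ cc ∈ Fx,
      γ * (t3 a (σ (γ a)) cc) * γ = σ⁻¹ * (t3 a (σ (γ a)) cc)⁻¹ * σ := by
    intro a ha cc hcc
    obtain ⟨hgc, hcc3⟩ := hFx_rel cc hcc
    obtain ⟨hab, hac, hbc⟩ := hdist a ha cc hcc
    have hconj : ∀ f : Perm (Fin d), γ * f * γ = γ * f * γ⁻¹ := fun f => by rw [hγinv]
    have hL : γ * (t3 a (σ (γ a)) cc) * γ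
        = Equiv.swap (γ a) (γ cc) * Equiv.swap (γ a) (γ (σ (γ a))) := by
      rw [t3_def]
      calc γ * (Equiv.swap a cc * Equiv.swap a (σ (γ a))) * γ
          = γ * (Equiv.swap a cc * Equiv.swap a (σ (γ a))) * γ⁻¹ := hconj _
        _ = (γ * Equiv.swap a cc * γ⁻¹) * (γ * Equiv.swap a (σ (γ a)) * γ⁻¹) := by group
        _ = _ := by rw [← swap_apply_apply, ← swap_apply_apply]
    have hR : σ⁻¹ * (t3 a (σ (γ a)) cc)⁻¹ * σ
        = Equiv.swap (σ⁻¹ a) (σ⁻¹ (σ (γ a))) * Equiv.swap (σ⁻¹ a) (σ⁻¹ cc) := by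
      rw [t3_def, mul_inv_rev, swap_inv, swap_inv]
      have h5 : σ⁻¹ * (Equiv.swap a (σ (γ a)) * Equiv.swap a cc) * σ
          = (σ⁻¹ * Equiv.swap a (σ (γ a)) * (σ⁻¹)⁻¹) * (σ⁻¹ * Equiv.swap a cc * (σ⁻¹)⁻¹) := by
        group
      rw [h5, ← swap_apply_apply, ← swap_apply_apply]
    rw [hL, hR, hgb a, hgc, Perm.inv_apply_self]
    refine swap_rel ?_ ?_ ?_
    · intro h
      have h6 := congrArg σ h
      rw [Perm.apply_inv_self] at h6
      exact hab h6
    · intro h; exact hac (σ⁻¹.injective h)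
    · intro h
      have h6 := congrArg σ h
      rw [Perm.apply_inv_self] at h6
      exact hbc h6
  have hreal_inv : ∀ τ : Perm (Fin d), γ * τ * γ = σ⁻¹ * τ⁻¹ * σ →
      γ * τ⁻¹ * γ = σ⁻¹ * (τ⁻¹)⁻¹ * σ := by
    intro τ h
    calc γ * τ⁻¹ * γ = (γ * τ * γ)⁻¹ := by rw [mul_inv_rev, mul_inv_rev, hγinv, mul_assoc]
      _ = (σ⁻¹ * τ⁻¹ * σ)⁻¹ := by rw [h]
      _ = σ⁻¹ * (τ⁻¹)⁻¹ * σ := by group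
  have hint : ∀ (x y z : Fin d) (S : Finset (Fin d)), x ∈ S → y ∉ S → z ∉ S →
      (({x, y, z} : Finset (Fin d)) ∩ S) = {x} := by
    intro x y z S hx hy hz
    ext w
    simp only [Finset.mem_inter, Finset.mem_insert, Finset.mem_singleton]
    constructor
    · rintro ⟨(rfl | rfl | rfl), hw⟩
      · rfl
      · exact absurd hw hy
      · exact absurd hw hz
    · rintro rfl
      exact ⟨Or.inl rfl, hx⟩
  have hperm2 : ∀ x y z : Fin d, ({x, y, z} : Finset (Fin d)) = {y, x, z} := by
    intro x y z; ext w; simp only [Finset.mem_insert, Finset.mem_singleton]; tauto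
  have hperm3 : ∀ x y z : Fin d, ({x, y, z} : Finset (Fin d)) = {z, x, y} := by
    intro x y z; ext w; simp only [Finset.mem_insert, Finset.mem_singleton]; tauto
  have hmem_t3 : ∀ a ∈ c₁.support, ∀ cc ∈ Fx, ∀ τ : Perm (Fin d),
      (τ = t3 a (σ (γ a)) cc ∨ τ = (t3 a (σ (γ a)) cc)⁻¹) →
      (τ.IsThreeCycle ∧ (τ.support ∩ c₁.support).card = 1 ∧
        (τ.support ∩ c₂.support).card = 1 ∧ (τ.support ∩ c₃.support).card = 1 ∧
        γ * (τ * σ) * γ = (τ * σ)⁻¹) := by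
    intro a ha cc hcc τ hτ
    obtain ⟨hgc, hcc3⟩ := hFx_rel cc hcc
    have hb2 : σ (γ a) ∈ c₂.support := hb_mem a ha
    obtain ⟨hab, hac, hbc⟩ := hdist a ha cc hcc
    have h3c : (t3 a (σ (γ a)) cc).IsThreeCycle := t3_isThreeCycle hab hac hbc
    have hsup : (t3 a (σ (γ a)) cc).support = {a, σ (γ a), cc} := t3_support hab hac hbc
    have hsupτ : τ.support = {a, σ (γ a), cc} := by
      rcases hτ with rfl | rfl
      · exact hsup
      · rw [Perm.support_inv]; exact hsup
    have h3cτ : τ.IsThreeCycle := by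
      rcases hτ with rfl | rfl
      · exact h3c
      · exact h3c.inv
    refine ⟨h3cτ, ?_, ?_, ?_, ?_⟩
    · rw [hsupτ, hint a _ _ _ ha (Finset.disjoint_right.mp hd12 hb2)
        (Finset.disjoint_right.mp hd13 hcc3), Finset.card_singleton]
    · rw [hsupτ, hperm2, hint _ _ _ _ hb2 (Finset.disjoint_left.mp hd12 ha)
        (Finset.disjoint_right.mp hd23 hcc3), Finset.card_singleton]
    · rw [hsupτ, hperm3, hint _ _ _ _ hcc3 (Finset.disjoint_left.mp hd13 ha)
        (Finset.disjoint_left.mp hd23 hb2), Finset.card_singleton]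
    · rw [hcond]
      rcases hτ with rfl | rfl
      · exact hreal_t3 a ha cc hcc
      · exact hreal_inv _ (hreal_t3 a ha cc hcc)
  have hmem' : ∀ p : (↥c₁.support × ↥Fx × Bool),
      ((phiFun σ γ c₁.support Fx p).IsThreeCycle ∧
      ((phiFun σ γ c₁.support Fx p).support ∩ c₁.support).card = 1 ∧
      ((phiFun σ γ c₁.support Fx p).support ∩ c₂.support).card = 1 ∧
      ((phiFun σ γ c₁.support Fx p).support ∩ c₃.support).card = 1 ∧
      γ * (phiFun σ γ c₁.support Fx p * σ) * γ = (phiFun σ γ c₁.support Fx p * σ)⁻¹) := by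
    rintro ⟨⟨a, ha⟩, ⟨cc, hcc⟩, o⟩
    refine hmem_t3 a ha cc hcc _ ?_
    cases o
    · right; rfl
    · left; rfl
  have hsupp_phi : ∀ (a : Fin d) (cc : Fin d) (ha : a ∈ c₁.support) (hcc : cc ∈ Fx) (o : Bool),
      (phiFun σ γ c₁.support Fx ⟨⟨a, ha⟩, ⟨cc, hcc⟩, o⟩).support = {a, σ (γ a), cc} := by
    intro a cc ha hcc o
    obtain ⟨hd1, hd2, hd3⟩ := hdist a ha cc hcc
    cases o
    · show ((t3 a (σ (γ a)) cc)⁻¹).support = _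
      rw [Perm.support_inv]
      exact t3_support hd1 hd2 hd3
    · exact t3_support hd1 hd2 hd3
  have hbij : Function.Bijective (fun p : (↥c₁.support × ↥Fx × Bool) =>
      (⟨phiFun σ γ c₁.support Fx p, hmem' p⟩ :
      {τ : Perm (Fin d) // τ.IsThreeCycle ∧
        (τ.support ∩ c₁.support).card = 1 ∧
        (τ.support ∩ c₂.support).card = 1 ∧
        (τ.support ∩ c₃.support).card = 1 ∧
        γ * (τ * σ) * γ = (τ * σ)⁻¹})) := by
    constructor
    · rintro ⟨⟨a, ha⟩, ⟨cc, hcc⟩, o⟩ ⟨⟨a', ha'⟩, ⟨cc', hcc'⟩, o'⟩ heq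
      have heq1 : phiFun σ γ c₁.support Fx ⟨⟨a, ha⟩, ⟨cc, hcc⟩, o⟩
          = phiFun σ γ c₁.support Fx ⟨⟨a', ha'⟩, ⟨cc', hcc'⟩, o'⟩ :=
        congrArg Subtype.val heq
      obtain ⟨hd1, hd2, hd3⟩ := hdist a ha cc hcc
      have hccS := (hFx_rel cc hcc).2
      have hccS' := (hFx_rel cc' hcc').2
      have hbS := hb_mem a ha
      have hbS' := hb_mem a' ha'
      have hsupps : ({a, σ (γ a), cc} : Finset (Fin d)) = {a', σ (γ a'), cc'} := by
        rw [← hsupp_phi a cc ha hcc o, ← hsupp_phi a' cc' ha' hcc' o', heq1]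
      have haa : a = a' := by
        have hmem : a ∈ ({a', σ (γ a'), cc'} : Finset (Fin d)) := by
          rw [← hsupps]; simp
        simp only [Finset.mem_insert, Finset.mem_singleton] at hmem
        rcases hmem with h | h | h
        · exact h
        · rw [← h] at hbS'
          exact absurd hbS' (Finset.disjoint_left.mp hd12 ha)
        · rw [← h] at hccS'
          exact absurd hccS' (Finset.disjoint_left.mp hd13 ha)
      have hccc : cc = cc' := by
        have hmem : cc ∈ ({a', σ (γ a'), cc'} : Finset (Fin d)) := by
          rw [← hsupps]; simp
        simp only [Finset.mem_insert, Finset.mem_singleton] at hmem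
        rcases hmem with h | h | h
        · rw [h] at hccS
          exact absurd ha' (Finset.disjoint_right.mp hd13 hccS)
        · rw [← h] at hbS'
          exact absurd hbS' (Finset.disjoint_right.mp hd23 hccS)
        · exact h
      subst haa
      subst hccc
      cases o <;> cases o'
      · rfl
      · exfalso
        have heq2 : (t3 a (σ (γ a)) cc)⁻¹ = t3 a (σ (γ a)) cc := heq1
        have h5 := congrArg (fun f : Perm (Fin d) => f a) heq2
        rw [t3_inv_apply_a hd2 hd3, t3_apply_a hd1 hd3] at h5
        exact hd3 h5.symm
      · exfalso
        have heq2 : t3 a (σ (γ a)) cc = (t3 a (σ (γ a)) cc)⁻¹ := heq1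
        have h5 := congrArg (fun f : Perm (Fin d) => f a) heq2
        rw [t3_inv_apply_a hd2 hd3, t3_apply_a hd1 hd3] at h5
        exact hd3 h5
      · rfl
    · rintro ⟨τ, h3c, i1, i2, i3, hrl⟩
      have hrl' : γ * τ * γ = σ⁻¹ * τ⁻¹ * σ := (hcond τ).mp hrl
      obtain ⟨a, ha⟩ := Finset.card_eq_one.mp i1
      obtain ⟨b, hb⟩ := Finset.card_eq_one.mp i2
      obtain ⟨cc, hcs⟩ := Finset.card_eq_one.mp i3
      have haτ : a ∈ τ.support ∧ a ∈ c₁.support :=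
        Finset.mem_inter.mp (ha ▸ Finset.mem_singleton_self a)
      have hbτ : b ∈ τ.support ∧ b ∈ c₂.support :=
        Finset.mem_inter.mp (hb ▸ Finset.mem_singleton_self b)
      have hccτ : cc ∈ τ.support ∧ cc ∈ c₃.support :=
        Finset.mem_inter.mp (hcs ▸ Finset.mem_singleton_self cc)
      have hab : a ≠ b := fun h => Finset.disjoint_left.mp hd12 haτ.2 (h ▸ hbτ.2)
      have hac : a ≠ cc := fun h => Finset.disjoint_left.mp hd13 haτ.2 (h ▸ hccτ.2)
      have hbc : b ≠ cc := fun h => Finset.disjoint_left.mp hd23 hbτ.2 (h ▸ hccτ.2)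
      have hsub : ({a, b, cc} : Finset (Fin d)) ⊆ τ.support := by
        intro x hx
        simp only [Finset.mem_insert, Finset.mem_singleton] at hx
        rcases hx with rfl | rfl | rfl
        · exact haτ.1
        · exact hbτ.1
        · exact hccτ.1
      have hsupp : τ.support = {a, b, cc} := by
        refine (Finset.eq_of_subset_of_card_le hsub ?_).symm
        rw [h3c.card_support, card_triple hab hac hbc]
      have hkey : ∀ x ∈ τ.support, σ (γ x) ∈ τ.support := by
        intro x hx
        have h3 := DFunLike.congr_fun hrl' (γ x)
        simp only [Perm.mul_apply, hγγ] at h3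
        have hτx : τ x ≠ x := mem_support.mp hx
        have h4 : τ⁻¹ (σ (γ x)) ≠ σ (γ x) := by
          intro hcontra
          rw [hcontra, Perm.inv_apply_self] at h3
          exact hτx (γ.injective h3)
        rw [← Perm.support_inv]
        exact mem_support.mpr h4
      have hb_eq : σ (γ a) = b := by
        have h5 : σ (γ a) ∈ τ.support ∩ c₂.support :=
          Finset.mem_inter.mpr ⟨hkey a haτ.1, hmemσ h₂ _ (hγ12 a haτ.2)⟩
        rw [hb] at h5
        exact Finset.mem_singleton.mp h5
      have hc_eq : σ (γ cc) = cc := by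
        have h5 : σ (γ cc) ∈ τ.support ∩ c₃.support :=
          Finset.mem_inter.mpr ⟨hkey cc hccτ.1, hmemσ h₃ _ (hγ33 _ hccτ.2)⟩
        rw [hcs] at h5
        exact Finset.mem_singleton.mp h5
      have hccFx : cc ∈ Fx := by
        rw [hFxdef, Finset.mem_filter]
        refine ⟨hccτ.2, ?_⟩
        rw [← hfac h₃ _ (hγ33 _ hccτ.2)]
        exact hc_eq
      -- determine orientation
      have hτa_mem : τ a ∈ ({a, b, cc} : Finset (Fin d)) := by
        rw [← hsupp]
        exact apply_mem_support.mpr haτ.1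
      have hτb_mem : τ b ∈ ({a, b, cc} : Finset (Fin d)) := by
        rw [← hsupp]
        exact apply_mem_support.mpr hbτ.1
      have hτc_mem : τ cc ∈ ({a, b, cc} : Finset (Fin d)) := by
        rw [← hsupp]
        exact apply_mem_support.mpr hccτ.1
      simp only [Finset.mem_insert, Finset.mem_singleton] at hτa_mem hτb_mem hτc_mem
      have hτa_ne : τ a ≠ a := mem_support.mp haτ.1
      have hτb_ne : τ b ≠ b := mem_support.mp hbτ.1
      have hτc_ne : τ cc ≠ cc := mem_support.mp hccτ.1
      rcases hτa_mem with hta | hta | hta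
      · exact absurd hta hτa_ne
      · -- τ a = b, so τ b = cc, τ cc = a
        have htb : τ b = cc := by
          rcases hτb_mem with h | h | h
          · exfalso
            rcases hτc_mem with h' | h' | h'
            · exact Ne.symm hbc (τ.injective (h'.trans h.symm))
            · exact Ne.symm hac (τ.injective (h'.trans hta.symm))
            · exact hτc_ne h'
          · exact absurd h hτb_ne
          · exact h
        have htc : τ cc = a := by
          rcases hτc_mem with h | h | h
          · exact h
          · exact absurd (τ.injective (h.trans hta.symm)) (Ne.symm hac)
          · exact absurd h hτc_ne
        have hτeq : τ = t3 a b cc := eq_t3 hab hac hbc hsupp hta htb htc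
        refine ⟨⟨⟨a, haτ.2⟩, ⟨cc, hccFx⟩, true⟩, ?_⟩
        apply Subtype.ext
        show t3 a (σ (γ a)) cc = τ
        rw [hb_eq, hτeq]
      · -- τ a = cc, so τ b = a, τ cc = b : τ = (t3 a b cc)⁻¹
        have htb : τ b = a := by
          rcases hτb_mem with h | h | h
          · exact h
          · exact absurd h hτb_ne
          · exact absurd (τ.injective (h.trans hta.symm)) (Ne.symm hab)
        have htc : τ cc = b := by
          rcases hτc_mem with h | h | h
          · exact absurd (τ.injective (h.trans htb.symm)) (Ne.symm hbc)
          · exact h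
          · exact absurd h hτc_ne
        have hτeq : τ⁻¹ = t3 a b cc := by
          refine eq_t3 hab hac hbc ?_ ?_ ?_ ?_
          · rw [Perm.support_inv]; exact hsupp
          · rw [Perm.inv_eq_iff_eq]; exact htb.symm
          · rw [Perm.inv_eq_iff_eq]; exact htc.symm
          · rw [Perm.inv_eq_iff_eq]; exact hta.symm
        refine ⟨⟨⟨a, haτ.2⟩, ⟨cc, hccFx⟩, false⟩, ?_⟩
        apply Subtype.ext
        show (t3 a (σ (γ a)) cc)⁻¹ = τ
        rw [hb_eq, ← hτeq, inv_inv]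
  rw [← Nat.card_eq_of_bijective _ hbij, Nat.card_prod, Nat.card_prod,
    Nat.card_eq_fintype_card, Nat.card_eq_fintype_card, Nat.card_eq_fintype_card,
    Fintype.card_coe, Fintype.card_coe, Fintype.card_bool, hfixcard, hc₁]
  omega
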